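/- arXiv:2303.11920 — 6 statements merged into one kernel-verified Lean document; each statement's English description precedes it below -/
import Mathlib

section
/- For a linear additive model f(x) = Σ_{i∈N} w_i u_i(x_i) with positive weights summing to 1 and each u_i attaining both 0 and 1, and for any instance x and any set S ⊆ N of features, the range of f over variations of the features in S equals the sum of their weights: ymax_S(x) − ymin_S(x) = Σ_{k∈S} w_k. -/
set_option linter.unusedSectionVars false

open Finset

variable {N : Type*} [Fintype N] [DecidableEq N]
variable {X : N → Type*} [∀ i, Fintype (X i)] [∀ i, DecidableEq (X i)] [∀ i, Nonempty (X i)]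

/-- The instances that agree with `x` on every feature outside `S`. -/
def varies (x : ∀ i, X i) (S : Finset N) : Finset (∀ i, X i) :=
  Finset.univ.filter (fun y => ∀ j ∉ S, y j = x j)

theorem varies_nonempty (x : ∀ i, X i) (S : Finset N) : (varies x S).Nonempty :=
  ⟨x, by simp [varies]⟩

/-- `ymin_S(x)`: the minimum of `f` over all instances agreeing with `x` outside `S`. -/
noncomputable def ymin (f : (∀ i, X i) → ℝ) (x : ∀ i, X i) (S : Finset N) : ℝ :=
  (varies x S).inf' (varies_nonempty x S) f

/-- `ymax_S(x)`: the maximum of `f` over all instances agreeing with `x` outside `S`. -/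
noncomputable def ymax (f : (∀ i, X i) → ℝ) (x : ∀ i, X i) (S : Finset N) : ℝ :=
  (varies x S).sup' (varies_nonempty x S) f

/-- Contextual Importance `ω_{S,I}(x)`. -/
noncomputable def CI (f : (∀ i, X i) → ℝ) (x : ∀ i, X i) (S I : Finset N) : ℝ :=
  (ymax f x S - ymin f x S) / (ymax f x I - ymin f x I)

/-- Contextual Utility `CU_S(x)`. -/
noncomputable def CU (f : (∀ i, X i) → ℝ) (x : ∀ i, X i) (S : Finset N) : ℝ :=
  (f x - ymin f x S) / (ymax f x S - ymin f x S)

/-- Contextual influence `φ_{S,I}(x) = ω_{S,I}(x)·(CU_S(x) − φ₀)`. -/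
noncomputable def Cinfl (f : (∀ i, X i) → ℝ) (x : ∀ i, X i) (S I : Finset N) (φ₀ : ℝ) : ℝ :=
  CI f x S I * (CU f x S - φ₀)

/-- For a linear additive model, the range of `f` over variations of the features in `S`
equals the sum of their weights. -/
theorem range_eq_sum_weights
    (w : N → ℝ) (u : ∀ i, X i → ℝ) (f : (∀ i, X i) → ℝ)
    (hw : ∀ i, 0 < w i) (hwsum : ∑ i, w i = 1)
    (hu01 : ∀ i t, u i t ∈ Set.Icc (0 : ℝ) 1)
    (hu0 : ∀ i, ∃ t, u i t = 0) (hu1 : ∀ i, ∃ t, u i t = 1)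
    (hf : ∀ y, f y = ∑ i, w i * u i (y i)) :
    ∀ (x : ∀ i, X i) (S : Finset N), ymax f x S - ymin f x S = ∑ k ∈ S, w k := by
  intro x S
  classical
  set C : ℝ := ∑ i ∈ Sᶜ, w i * u i (x i) with hC
  have hsplit : ∀ y : ∀ i, X i, f y = (∑ i ∈ S, w i * u i (y i)) + ∑ i ∈ Sᶜ, w i * u i (y i) := by
    intro y
    rw [hf y, ← Finset.sum_add_sum_compl S]
  have hmem : ∀ y, y ∈ varies x S ↔ ∀ j ∉ S, y j = x j := by
    intro y; simp [varies]
  have hcompl : ∀ y ∈ varies x S, (∑ i ∈ Sᶜ, w i * u i (y i)) = C := by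
    intro y hy
    refine Finset.sum_congr rfl fun i hi => ?_
    rw [(hmem y).1 hy i (Finset.mem_compl.1 hi)]
  have hmax : ymax f x S = (∑ k ∈ S, w k) + C := by
    apply le_antisymm
    · apply Finset.sup'_le
      intro y hy
      rw [hsplit y, hcompl y hy]
      gcongr with i hi
      calc w i * u i (y i) ≤ w i * 1 := by
            have := (hu01 i (y i)).2
            nlinarith [(hw i).le]
        _ = w i := mul_one _
    · set ym : ∀ i, X i := fun i => if h : i ∈ S then Classical.choose (hu1 i) else x i with hym
      have hymmem : ym ∈ varies x S := by
        rw [hmem]; intro j hj; simp [hym, hj]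
      refine le_trans ?_ (Finset.le_sup' f hymmem)
      rw [hsplit ym, hcompl ym hymmem]
      gcongr with i hi
      have : u i (ym i) = 1 := by
        simp only [hym, dif_pos hi]
        exact Classical.choose_spec (hu1 i)
      rw [this, mul_one]
  have hmin : ymin f x S = C := by
    apply le_antisymm
    · set ym : ∀ i, X i := fun i => if h : i ∈ S then Classical.choose (hu0 i) else x i with hym
      have hymmem : ym ∈ varies x S := by
        rw [hmem]; intro j hj; simp [hym, hj]
      refine le_trans (Finset.inf'_le f hymmem) ?_
      rw [hsplit ym, hcompl ym hymmem]
      have : (∑ i ∈ S, w i * u i (ym i)) = 0 := by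
        apply Finset.sum_eq_zero
        intro i hi
        have : u i (ym i) = 0 := by
          simp only [hym, dif_pos hi]
          exact Classical.choose_spec (hu0 i)
        rw [this, mul_zero]
      rw [this, zero_add]
    · apply Finset.le_inf'
      intro y hy
      rw [hsplit y, hcompl y hy]
      have : (0:ℝ) ≤ ∑ i ∈ S, w i * u i (y i) := by
        apply Finset.sum_nonneg
        intro i _
        exact mul_nonneg (hw i).le (hu01 i (y i)).1
      linarith
  rw [hmax, hmin]; ring
end

section
/- For a linear additive model f(x) = Σ_{i∈N} w_i u_i(x_i) with positive weights summing to 1 and each u_i attaining both 0 and 1, and for any instance x and any nested feature sets S ⊆ I ⊆ N with I nonempty, the Contextual Importance equals the ratio of weight sums: ω_{S,I}(x) = (Σ_{k∈S} w_k)/(Σ_{k∈I} w_k). In particular, ω_{S,I}(x) takes the same value for every instance x. -/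
set_option linter.unusedSectionVars false

open Finset

variable {N : Type*} [Fintype N] [DecidableEq N]
variable {X : N → Type*} [∀ i, Fintype (X i)] [∀ i, DecidableEq (X i)] [∀ i, Nonempty (X i)]

lemma spread_eq (w : N → ℝ) (u : ∀ i, X i → ℝ) (f : (∀ i, X i) → ℝ)
    (hw : ∀ i, 0 ≤ w i)
    (hu01 : ∀ i t, u i t ∈ Set.Icc (0 : ℝ) 1)
    (hu0 : ∀ i, ∃ t, u i t = 0) (hu1 : ∀ i, ∃ t, u i t = 1)
    (hf : ∀ y, f y = ∑ i, w i * u i (y i))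
    (S : Finset N) (x : ∀ i, X i) :
    ymax f x S - ymin f x S = ∑ k ∈ S, w k := by
  classical
  set m : ℝ := ∑ i ∈ Sᶜ, w i * u i (x i) with hm
  have split : ∀ y : ∀ i, X i,
      f y = (∑ i ∈ S, w i * u i (y i)) + ∑ i ∈ Sᶜ, w i * u i (y i) := by
    intro y; rw [hf]; exact (Finset.sum_add_sum_compl S _).symm
  have hmem : ∀ y : ∀ i, X i, y ∈ varies x S ↔ ∀ j ∉ S, y j = x j := by
    intro y; simp [varies]
  -- witnesses
  set y0 : ∀ i, X i := fun i => if h : i ∈ S then Classical.choose (hu0 i) else x i with hy0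
  set y1 : ∀ i, X i := fun i => if h : i ∈ S then Classical.choose (hu1 i) else x i with hy1
  have hy0mem : y0 ∈ varies x S := (hmem y0).2 (fun j hj => by simp [hy0, hj])
  have hy1mem : y1 ∈ varies x S := (hmem y1).2 (fun j hj => by simp [hy1, hj])
  have hcm : ∀ y : ∀ i, X i, y ∈ varies x S →
      (∑ i ∈ Sᶜ, w i * u i (y i)) = m := by
    intro y hy
    refine Finset.sum_congr rfl fun i hi => ?_
    rw [(hmem y).1 hy i (Finset.mem_compl.mp hi)]
  have hfy0 : f y0 = m := by
    rw [split, hcm y0 hy0mem]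
    have : (∑ i ∈ S, w i * u i (y0 i)) = 0 := by
      refine Finset.sum_eq_zero fun i hi => ?_
      simp [hy0, hi, Classical.choose_spec (hu0 i)]
    rw [this, zero_add]
  have hfy1 : f y1 = (∑ k ∈ S, w k) + m := by
    rw [split, hcm y1 hy1mem]
    congr 1
    refine Finset.sum_congr rfl fun i hi => ?_
    simp [hy1, hi, Classical.choose_spec (hu1 i)]
  have hmin : ymin f x S = m := by
    apply le_antisymm
    · exact hfy0 ▸ Finset.inf'_le f hy0mem
    · refine Finset.le_inf' _ _ fun y hy => ?_
      rw [split y, hcm y hy]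
      have : (0 : ℝ) ≤ ∑ i ∈ S, w i * u i (y i) :=
        Finset.sum_nonneg fun i _ => mul_nonneg (hw i) (hu01 i (y i)).1
      linarith
  have hmax : ymax f x S = (∑ k ∈ S, w k) + m := by
    apply le_antisymm
    · refine Finset.sup'_le _ _ fun y hy => ?_
      rw [split y, hcm y hy]
      have : (∑ i ∈ S, w i * u i (y i)) ≤ ∑ k ∈ S, w k :=
        Finset.sum_le_sum fun i _ => by
          have := (hu01 i (y i)).2
          nlinarith [hw i]
      linarith
    · exact hfy1 ▸ Finset.le_sup' f hy1mem
  rw [hmin, hmax]; ring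

/-- For a linear additive model, the Contextual Importance equals the ratio of weight
sums, independently of the instance. -/
theorem CI_eq_weight_ratio
    (w : N → ℝ) (u : ∀ i, X i → ℝ) (f : (∀ i, X i) → ℝ)
    (hw : ∀ i, 0 < w i) (hwsum : ∑ i, w i = 1)
    (hu01 : ∀ i t, u i t ∈ Set.Icc (0 : ℝ) 1)
    (hu0 : ∀ i, ∃ t, u i t = 0) (hu1 : ∀ i, ∃ t, u i t = 1)
    (hf : ∀ y, f y = ∑ i, w i * u i (y i))
    (S I : Finset N) (hSI : S ⊆ I) (hI : I.Nonempty) :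
    (∀ x : ∀ i, X i, CI f x S I = (∑ k ∈ S, w k) / (∑ k ∈ I, w k)) ∧
    (∀ x x' : ∀ i, X i, CI f x S I = CI f x' S I) := by
  have hw' : ∀ i, 0 ≤ w i := fun i => (hw i).le
  have key : ∀ x : ∀ i, X i, CI f x S I = (∑ k ∈ S, w k) / (∑ k ∈ I, w k) := by
    intro x
    unfold CI
    rw [spread_eq w u f hw' hu01 hu0 hu1 hf S x,
        spread_eq w u f hw' hu01 hu0 hu1 hf I x]
  exact ⟨key, fun x x' => by rw [key x, key x']⟩
end

section
/- For a linear additive model f(x) = Σ_{i∈N} w_i u_i(x_i) with positive weights summing to 1 and each u_i attaining both 0 and 1, the Contextual Importance is additive over disjoint coalitions of features: for any instance x, any nonempty I ⊆ N, and any disjoint sets A, B ⊆ I, ω_{A∪B,I}(x) = ω_{A,I}(x) + ω_{B,I}(x). -/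
set_option linter.unusedSectionVars false

open Finset

variable {N : Type*} [Fintype N] [DecidableEq N]
variable {X : N → Type*} [∀ i, Fintype (X i)] [∀ i, DecidableEq (X i)] [∀ i, Nonempty (X i)]

lemma ymin_eq_lin (w : N → ℝ) (u : ∀ i, X i → ℝ) (f : (∀ i, X i) → ℝ)
    (hw : ∀ i, 0 < w i)
    (hu01 : ∀ i t, u i t ∈ Set.Icc (0 : ℝ) 1)
    (hu0 : ∀ i, ∃ t, u i t = 0)
    (hf : ∀ y, f y = ∑ i, w i * u i (y i))
    (x : ∀ i, X i) (S : Finset N) :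
    ymin f x S = ∑ i ∈ Sᶜ, w i * u i (x i) := by
  classical
  apply le_antisymm
  · set y : ∀ i, X i := fun i => if i ∈ S then Classical.choose (hu0 i) else x i with hy
    have hymem : y ∈ varies x S := by
      simp only [varies, Finset.mem_filter, Finset.mem_univ, true_and]
      intro j hj; simp [hy, hj]
    refine le_trans (Finset.inf'_le f hymem) ?_
    rw [hf, ← Finset.sum_add_sum_compl S (fun i => w i * u i (y i))]
    have h1 : ∑ i ∈ S, w i * u i (y i) = 0 := by
      apply Finset.sum_eq_zero; intro i hi
      simp [hy, hi, Classical.choose_spec (hu0 i)]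
    have h2 : ∑ i ∈ Sᶜ, w i * u i (y i) = ∑ i ∈ Sᶜ, w i * u i (x i) := by
      apply Finset.sum_congr rfl; intro i hi
      simp only [Finset.mem_compl] at hi; simp [hy, hi]
    rw [h1, h2]; simp
  · apply Finset.le_inf'
    intro y hy
    simp only [varies, Finset.mem_filter, Finset.mem_univ, true_and] at hy
    rw [hf, ← Finset.sum_add_sum_compl S (fun i => w i * u i (y i))]
    have h2 : ∑ i ∈ Sᶜ, w i * u i (y i) = ∑ i ∈ Sᶜ, w i * u i (x i) := by
      apply Finset.sum_congr rfl; intro i hi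
      simp only [Finset.mem_compl] at hi; rw [hy i hi]
    rw [h2]
    have : 0 ≤ ∑ i ∈ S, w i * u i (y i) :=
      Finset.sum_nonneg fun i _ => mul_nonneg (hw i).le (hu01 i _).1
    linarith

lemma ymax_eq_lin (w : N → ℝ) (u : ∀ i, X i → ℝ) (f : (∀ i, X i) → ℝ)
    (hw : ∀ i, 0 < w i)
    (hu01 : ∀ i t, u i t ∈ Set.Icc (0 : ℝ) 1)
    (hu1 : ∀ i, ∃ t, u i t = 1)
    (hf : ∀ y, f y = ∑ i, w i * u i (y i))
    (x : ∀ i, X i) (S : Finset N) :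
    ymax f x S = (∑ i ∈ S, w i) + ∑ i ∈ Sᶜ, w i * u i (x i) := by
  classical
  apply le_antisymm
  · apply Finset.sup'_le
    intro y hy
    simp only [varies, Finset.mem_filter, Finset.mem_univ, true_and] at hy
    rw [hf, ← Finset.sum_add_sum_compl S (fun i => w i * u i (y i))]
    have h2 : ∑ i ∈ Sᶜ, w i * u i (y i) = ∑ i ∈ Sᶜ, w i * u i (x i) := by
      apply Finset.sum_congr rfl; intro i hi
      simp only [Finset.mem_compl] at hi; rw [hy i hi]
    rw [h2]
    have : ∑ i ∈ S, w i * u i (y i) ≤ ∑ i ∈ S, w i := by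
      apply Finset.sum_le_sum; intro i _
      calc w i * u i (y i) ≤ w i * 1 :=
            mul_le_mul_of_nonneg_left (hu01 i _).2 (hw i).le
        _ = w i := mul_one _
    linarith
  · set y : ∀ i, X i := fun i => if i ∈ S then Classical.choose (hu1 i) else x i with hy
    have hymem : y ∈ varies x S := by
      simp only [varies, Finset.mem_filter, Finset.mem_univ, true_and]
      intro j hj; simp [hy, hj]
    refine le_trans ?_ (Finset.le_sup' f hymem)
    rw [hf, ← Finset.sum_add_sum_compl S (fun i => w i * u i (y i))]
    have h1 : ∑ i ∈ S, w i * u i (y i) = ∑ i ∈ S, w i := by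
      apply Finset.sum_congr rfl; intro i hi
      simp [hy, hi, Classical.choose_spec (hu1 i)]
    have h2 : ∑ i ∈ Sᶜ, w i * u i (y i) = ∑ i ∈ Sᶜ, w i * u i (x i) := by
      apply Finset.sum_congr rfl; intro i hi
      simp only [Finset.mem_compl] at hi; simp [hy, hi]
    rw [h1, h2]

/-- For a linear additive model, Contextual Importance is additive over disjoint
coalitions of features. -/
theorem CI_additive_disjoint
    (w : N → ℝ) (u : ∀ i, X i → ℝ) (f : (∀ i, X i) → ℝ)
    (hw : ∀ i, 0 < w i) (hwsum : ∑ i, w i = 1)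
    (hu01 : ∀ i t, u i t ∈ Set.Icc (0 : ℝ) 1)
    (hu0 : ∀ i, ∃ t, u i t = 0) (hu1 : ∀ i, ∃ t, u i t = 1)
    (hf : ∀ y, f y = ∑ i, w i * u i (y i))
    (x : ∀ i, X i) (I : Finset N) (hI : I.Nonempty)
    (A B : Finset N) (hA : A ⊆ I) (hB : B ⊆ I) (hAB : Disjoint A B) :
    CI f x (A ∪ B) I = CI f x A I + CI f x B I := by
  have spread : ∀ S : Finset N, ymax f x S - ymin f x S = ∑ i ∈ S, w i := by
    intro S
    rw [ymax_eq_lin w u f hw hu01 hu1 hf x S, ymin_eq_lin w u f hw hu01 hu0 hf x S]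
    ring
  simp only [CI, spread, Finset.sum_union hAB, add_div]
end

section
/- For a linear additive model f(x) = Σ_{i∈N} w_i u_i(x_i) with positive weights summing to 1 and each u_i attaining both 0 and 1, and for any instance x and any nonempty set S ⊆ N of features, the Contextual Utility equals the weighted average of the constituent feature utilities: CU_S(x) = (Σ_{k∈S} w_k u_k(x_k))/(Σ_{k∈S} w_k). In particular, for a singleton S = {i}, CU_{{i}}(x) = u_i(x_i). -/
set_option linter.unusedSectionVars false

open Finset

variable {N : Type*} [Fintype N] [DecidableEq N]
variable {X : N → Type*} [∀ i, Fintype (X i)] [∀ i, DecidableEq (X i)] [∀ i, Nonempty (X i)]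

/-- For a linear additive model, the Contextual Utility is the weighted average of the
constituent feature utilities; in particular for a singleton it is that feature's utility. -/
theorem CU_eq_weighted_average
    (w : N → ℝ) (u : ∀ i, X i → ℝ) (f : (∀ i, X i) → ℝ)
    (hw : ∀ i, 0 < w i) (hwsum : ∑ i, w i = 1)
    (hu01 : ∀ i t, u i t ∈ Set.Icc (0 : ℝ) 1)
    (hu0 : ∀ i, ∃ t, u i t = 0) (hu1 : ∀ i, ∃ t, u i t = 1)
    (hf : ∀ y, f y = ∑ i, w i * u i (y i))
    (x : ∀ i, X i) :
    (∀ S : Finset N, S.Nonempty →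
      CU f x S = (∑ k ∈ S, w k * u k (x k)) / (∑ k ∈ S, w k)) ∧
    (∀ i : N, CU f x {i} = u i (x i)) := by
  classical
  choose t0 ht0 using hu0
  choose t1 ht1 using hu1
  have main : ∀ S : Finset N, S.Nonempty →
      CU f x S = (∑ k ∈ S, w k * u k (x k)) / (∑ k ∈ S, w k) := by
    intro S hS
    set A := ∑ j ∈ Sᶜ, w j * u j (x j) with hA
    have hsplit : ∀ y ∈ varies x S, f y = A + ∑ j ∈ S, w j * u j (y j) := by
      intro y hy
      simp only [varies, Finset.mem_filter, Finset.mem_univ, true_and] at hy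
      rw [hf, ← Finset.sum_compl_add_sum S]
      congr 1
      exact Finset.sum_congr rfl fun j hj => by rw [hy j (Finset.mem_compl.mp hj)]
    have hmem : ∀ (g : ∀ i, X i),
        (fun j => if j ∈ S then g j else x j) ∈ varies x S := by
      intro g
      simp only [varies, Finset.mem_filter, Finset.mem_univ, true_and]
      intro j hj
      simp [hj]
    have hxmem : x ∈ varies x S := by
      simp [varies]
    have hymin : ymin f x S = A := by
      apply le_antisymm
      · refine le_trans (Finset.inf'_le f (hmem t0)) ?_
        rw [hsplit _ (hmem t0)]
        have h0 : ∑ j ∈ S, w j * u j (if j ∈ S then t0 j else x j) = 0 :=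
          Finset.sum_eq_zero fun j hj => by simp [hj, ht0 j]
        simp only [h0]
        linarith
      · apply Finset.le_inf'
        intro y hy
        rw [hsplit y hy]
        have : (0:ℝ) ≤ ∑ j ∈ S, w j * u j (y j) :=
          Finset.sum_nonneg fun j _ => mul_nonneg (hw j).le (hu01 j (y j)).1
        linarith
    have hymax : ymax f x S = A + ∑ j ∈ S, w j := by
      apply le_antisymm
      · apply Finset.sup'_le
        intro y hy
        rw [hsplit y hy]
        have : ∑ j ∈ S, w j * u j (y j) ≤ ∑ j ∈ S, w j :=
          Finset.sum_le_sum fun j _ => by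
            nlinarith [(hu01 j (y j)).2, (hw j).le]
        linarith
      · refine le_trans ?_ (Finset.le_sup' f (hmem t1))
        rw [hsplit _ (hmem t1)]
        have h1 : ∑ j ∈ S, w j * u j (if j ∈ S then t1 j else x j) = ∑ j ∈ S, w j :=
          Finset.sum_congr rfl fun j hj => by simp [hj, ht1 j]
        rw [h1]
    have hfx : f x = A + ∑ j ∈ S, w j * u j (x j) := hsplit x hxmem
    rw [CU, hymin, hymax, hfx]
    congr 1 <;> ring
  refine ⟨main, fun i => ?_⟩
  have := main {i} ⟨i, Finset.mem_singleton_self i⟩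
  simpa [mul_div_assoc, mul_div_cancel_left₀ _ (hw i).ne'] using this
end

section
/- For a linear additive model f(x) = Σ_{i∈N} w_i u_i(x_i) with positive weights summing to 1 and each u_i attaining both 0 and 1, and for any baseline φ₀ ∈ ℝ, any instance x, any nonempty I ⊆ N, and any i ∈ I, the Contextual influence of feature i equals φ_{{i},I}(x) = w_i·(u_i(x_i) − φ₀)/(Σ_{k∈I} w_k); in particular, with I = N it equals w_i·(u_i(x_i) − φ₀). -/
set_option linter.unusedSectionVars false

open Finset

variable {N : Type*} [Fintype N] [DecidableEq N]
variable {X : N → Type*} [∀ i, Fintype (X i)] [∀ i, DecidableEq (X i)] [∀ i, Nonempty (X i)]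

/-- For a linear additive model, the Contextual influence of a feature `i` equals
`w i · (u i (x i) − φ₀) / (Σ_{k∈I} w k)`; in particular with `I = N` it is
`w i · (u i (x i) − φ₀)`. -/
theorem Cinfl_eq
    (w : N → ℝ) (u : ∀ i, X i → ℝ) (f : (∀ i, X i) → ℝ)
    (hw : ∀ i, 0 < w i) (hwsum : ∑ i, w i = 1)
    (hu01 : ∀ i t, u i t ∈ Set.Icc (0 : ℝ) 1)
    (hu0 : ∀ i, ∃ t, u i t = 0) (hu1 : ∀ i, ∃ t, u i t = 1)
    (hf : ∀ y, f y = ∑ i, w i * u i (y i))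
    (φ₀ : ℝ) (x : ∀ i, X i) (I : Finset N) (hI : I.Nonempty) (i : N) (hi : i ∈ I) :
    Cinfl f x {i} I φ₀ = w i * (u i (x i) - φ₀) / (∑ k ∈ I, w k) ∧
    Cinfl f x {i} Finset.univ φ₀ = w i * (u i (x i) - φ₀) := by
  classical
  choose t0 ht0 using hu0
  choose t1 ht1 using hu1
  have split : ∀ (S : Finset N) y, y ∈ varies x S →
      f y = ∑ k ∈ S, w k * u k (y k) + ∑ k ∈ Sᶜ, w k * u k (x k) := by
    intro S y hy
    rw [hf, ← Finset.sum_add_sum_compl S]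
    congr 1
    refine Finset.sum_congr rfl fun k hk => ?_
    simp only [varies, Finset.mem_filter, Finset.mem_univ, true_and] at hy
    rw [hy k (by simpa using hk)]
  have hmin : ∀ S : Finset N, ymin f x S = ∑ k ∈ Sᶜ, w k * u k (x k) := by
    intro S
    have hy0 : (fun k => if k ∈ S then t0 k else x k) ∈ varies x S := by
      simp only [varies, Finset.mem_filter, Finset.mem_univ, true_and]
      intro j hj; simp [hj]
    apply le_antisymm
    · refine le_trans (Finset.inf'_le f hy0) ?_
      rw [split S _ hy0]
      have hz : ∑ k ∈ S, w k * u k (if k ∈ S then t0 k else x k) = 0 :=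
        Finset.sum_eq_zero fun k hk => by simp [hk, ht0 k]
      rw [hz, zero_add]
    · apply Finset.le_inf'
      intro y hy
      rw [split S y hy]
      have : (0:ℝ) ≤ ∑ k ∈ S, w k * u k (y k) :=
        Finset.sum_nonneg fun k _ => mul_nonneg (hw k).le (hu01 k _).1
      linarith
  have hmax : ∀ S : Finset N, ymax f x S = ∑ k ∈ S, w k + ∑ k ∈ Sᶜ, w k * u k (x k) := by
    intro S
    have hy1 : (fun k => if k ∈ S then t1 k else x k) ∈ varies x S := by
      simp only [varies, Finset.mem_filter, Finset.mem_univ, true_and]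
      intro j hj; simp [hj]
    apply le_antisymm
    · apply Finset.sup'_le
      intro y hy
      rw [split S y hy]
      have : ∑ k ∈ S, w k * u k (y k) ≤ ∑ k ∈ S, w k :=
        Finset.sum_le_sum fun k _ => by
          have := (hu01 k (y k)).2
          nlinarith [hw k]
      linarith
    · refine le_trans ?_ (Finset.le_sup' f hy1)
      rw [split S _ hy1]
      have hz : ∑ k ∈ S, w k * u k (if k ∈ S then t1 k else x k) = ∑ k ∈ S, w k :=
        Finset.sum_congr rfl fun k hk => by simp [hk, ht1 k]
      rw [hz]
  have hxmem : ∀ S : Finset N, x ∈ varies x S := fun S => by simp [varies]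
  have hdiff : ∀ S : Finset N, ymax f x S - ymin f x S = ∑ k ∈ S, w k := by
    intro S; rw [hmax, hmin]; ring
  have hfx : f x - ymin f x {i} = w i * u i (x i) := by
    rw [split {i} x (hxmem {i}), hmin, Finset.sum_singleton]
    ring
  have hCU : CU f x {i} = u i (x i) := by
    unfold CU
    rw [hfx, hdiff]
    rw [Finset.sum_singleton]
    exact mul_div_cancel_left₀ _ (hw i).ne'
  have hwI : (0:ℝ) < ∑ k ∈ I, w k := Finset.sum_pos (fun k _ => hw k) hI
  have hCI : ∀ J : Finset N, CI f x {i} J = w i / ∑ k ∈ J, w k := by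
    intro J
    unfold CI
    rw [hdiff, hdiff, Finset.sum_singleton]
  constructor
  · unfold Cinfl
    rw [hCI, hCU]
    ring
  · unfold Cinfl
    rw [hCI, hCU, hwsum]
    ring
end

section
/- Let N be a finite set, let f : (N → ℝ) → ℝ be the linear function f(y) = w₀ + Σ_{i∈N} w_i y_i, and for each i ∈ N let μ_i be a probability measure on ℝ with finite mean m_i = ∫ t dμ_i(t) (the features are independent with distribution the product of the μ_i). Fix an instance x : N → ℝ and define the cooperative game v_x(S) = ∫ f(y) d(Π_{j∉S} μ_j) where y_j = x_j for j ∈ S and the remaining coordinates are integrated out, minus the full expectation ∫ f d(Π_{j∈N} μ_j). Then the Shapley value of each player i in the game v_x equals φ_i(v_x) = w_i·(x_i − m_i). -/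
open MeasureTheory

/-- The Shapley value `φ_i(v) = Σ_{S ⊆ N∖{i}} (|S|!·(|N|−|S|−1)!/|N|!)·(v(S∪{i}) − v(S))`. -/
noncomputable def shapley {N : Type*} [Fintype N] [DecidableEq N]
    (v : Finset N → ℝ) (i : N) : ℝ :=
  ∑ S ∈ (Finset.univ.erase i).powerset,
    ((S.card.factorial * (Fintype.card N - S.card - 1).factorial : ℝ) /
        (Fintype.card N).factorial) *
      (v (insert i S) - v S)

lemma map_eval_pi_aux {N : Type*} [Fintype N] [DecidableEq N] (μ : N → Measure ℝ)
    [∀ i, IsProbabilityMeasure (μ i)] (j : N) :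
    Measure.map (Function.eval j) (Measure.pi μ) = μ j := by
  apply Measure.ext
  intro s hs
  rw [Measure.map_apply (measurable_pi_apply j) hs, Set.eval_preimage,
    Measure.pi_pi]
  rw [Finset.prod_eq_single j]
  · simp
  · intro k _ hk
    simp [Function.update_of_ne hk]
  · simp

lemma integrable_eval_pi {N : Type*} [Fintype N] [DecidableEq N] (μ : N → Measure ℝ)
    [∀ i, IsProbabilityMeasure (μ i)] (hμ : ∀ i, Integrable (id : ℝ → ℝ) (μ i)) (j : N) :
    Integrable (fun y : N → ℝ => y j) (Measure.pi μ) := by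
  have h := hμ j
  rw [← map_eval_pi_aux μ j] at h
  exact (integrable_map_measure h.aestronglyMeasurable
    (measurable_pi_apply j).aemeasurable).mp h

lemma integral_eval_pi {N : Type*} [Fintype N] [DecidableEq N] (μ : N → Measure ℝ)
    [∀ i, IsProbabilityMeasure (μ i)] (j : N) :
    ∫ y : N → ℝ, y j ∂(Measure.pi μ) = ∫ t, t ∂(μ j) := by
  classical
  have hsm : AEStronglyMeasurable (id : ℝ → ℝ)
      (Measure.map (Function.eval j) (Measure.pi μ)) := by
    rw [map_eval_pi_aux μ j]; exact aestronglyMeasurable_id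
  have h := integral_map (μ := Measure.pi μ) (φ := Function.eval j)
    (measurable_pi_apply j).aemeasurable hsm
  rw [map_eval_pi_aux μ j] at h
  exact h.symm

/-- For the linear model `f(y) = w₀ + Σ_i w_i y_i` with independent features distributed
according to probability measures `μ i` with means `m i`, the Shapley value of player `i`
in the conditional-expectation game at instance `x` is `w i · (x i − m i)`. -/
theorem shapley_linear_model {N : Type*} [Fintype N] [DecidableEq N]
    (w₀ : ℝ) (w : N → ℝ) (f : (N → ℝ) → ℝ)
    (hf : ∀ y, f y = w₀ + ∑ i, w i * y i)
    (μ : N → Measure ℝ) [∀ i, IsProbabilityMeasure (μ i)]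
    (hμ : ∀ i, Integrable (id : ℝ → ℝ) (μ i))
    (m : N → ℝ) (hm : ∀ i, m i = ∫ t, t ∂(μ i))
    (x : N → ℝ) (v : Finset N → ℝ)
    (hv : ∀ S : Finset N,
      v S = (∫ y, f (fun j => if j ∈ S then x j else y j) ∂(Measure.pi μ)) -
        ∫ y, f y ∂(Measure.pi μ))
    (i : N) :
    shapley v i = w i * (x i - m i) := by
  -- Step 1: compute the "conditional expectation" integral for any coalition S.
  have hA : ∀ S : Finset N,
      (∫ y, f (fun j => if j ∈ S then x j else y j) ∂(Measure.pi μ)) =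
        w₀ + ∑ j, w j * (if j ∈ S then x j else m j) := by
    intro S
    have hint : ∀ j : N, Integrable
        (fun y : N → ℝ => w j * (if j ∈ S then x j else y j)) (Measure.pi μ) := by
      intro j
      by_cases hj : j ∈ S
      · simp only [hj, if_true]
        exact integrable_const _
      · simp only [hj, if_false]
        exact (integrable_eval_pi μ hμ j).const_mul _
    simp_rw [hf]
    rw [integral_add (integrable_const _) (integrable_finset_sum _ (fun j _ => hint j)),
      integral_const]
    have hprob : (Measure.pi μ) Set.univ = 1 := by simp
    congr 1
    · simp [hprob]
    rw [integral_finset_sum _ (fun j _ => hint j)]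
    refine Finset.sum_congr rfl fun j _ => ?_
    by_cases hj : j ∈ S
    · simp [hj, hprob]
    · simp only [hj, if_false]
      rw [integral_const_mul, integral_eval_pi μ j, hm]
  -- Step 2: marginal contribution of player i is constant.
  have hkey : ∀ S : Finset N, i ∉ S →
      v (insert i S) - v S = w i * (x i - m i) := by
    intro S hiS
    rw [hv, hv, hA, hA]
    have : ∀ j : N,
        w j * (if j ∈ insert i S then x j else m j) - w j * (if j ∈ S then x j else m j) =
          if j = i then w i * (x i - m i) else 0 := by
      intro j
      by_cases hji : j = i
      · subst hji
        simp [hiS, mul_sub]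
      · simp [Finset.mem_insert, hji]
    have hsum : (∑ j, w j * (if j ∈ insert i S then x j else m j)) -
        ∑ j, w j * (if j ∈ S then x j else m j) = w i * (x i - m i) := by
      rw [← Finset.sum_sub_distrib]
      simp_rw [this]
      simp
    ring_nf
    ring_nf at hsum
    linarith [hsum]
  -- Step 3: the coefficients sum to 1.
  have hn : 0 < Fintype.card N := Fintype.card_pos_iff.mpr ⟨i⟩
  set n := Fintype.card N with hndef
  have hcard : (Finset.univ.erase i).card = n - 1 := by
    rw [Finset.card_erase_of_mem (Finset.mem_univ i), Finset.card_univ]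
  have hcoeff : ∑ S ∈ (Finset.univ.erase i).powerset,
      ((S.card.factorial * (n - S.card - 1).factorial : ℝ) / n.factorial) = 1 := by
    rw [Finset.sum_powerset_apply_card
      (fun k => ((k.factorial * (n - k - 1).factorial : ℝ) / n.factorial)), hcard]
    have : ∀ k ∈ Finset.range (n - 1 + 1),
        (n - 1).choose k • ((k.factorial * (n - k - 1).factorial : ℝ) / n.factorial) =
          (1 : ℝ) / n := by
      intro k hk
      rw [Finset.mem_range, Nat.lt_succ_iff] at hk
      have h1 : n - k - 1 = (n - 1) - k := by omega
      have h2 : ((n - 1).choose k * (k.factorial * ((n-1) - k).factorial) : ℕ) =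
          (n - 1).factorial := by
        rw [← mul_assoc]
        exact Nat.choose_mul_factorial_mul_factorial hk
      rw [h1, nsmul_eq_mul]
      have h2' : (((n - 1).choose k : ℝ)) * ((k.factorial : ℝ) * (((n-1) - k).factorial : ℝ)) =
          ((n-1).factorial : ℝ) := by exact_mod_cast h2
      have h3 : (n.factorial : ℝ) = n * (n - 1).factorial := by
        rw [← Nat.mul_factorial_pred hn.ne']
        push_cast
        ring
      have hfac' : ((n - 1).factorial : ℝ) ≠ 0 := by positivity
      rw [← mul_div_assoc, h2', h3, mul_comm, div_mul_eq_div_div, div_self hfac']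
    rw [Finset.sum_congr rfl this, Finset.sum_const, nsmul_eq_mul]
    have : (n - 1 + 1 : ℕ) = n := by omega
    rw [this]
    field_simp
    rw [Finset.card_range]
  -- Conclusion.
  unfold shapley
  rw [← hndef]
  calc ∑ S ∈ (Finset.univ.erase i).powerset,
        ((S.card.factorial * (n - S.card - 1).factorial : ℝ) / n.factorial) *
          (v (insert i S) - v S)
      = ∑ S ∈ (Finset.univ.erase i).powerset,
        ((S.card.factorial * (n - S.card - 1).factorial : ℝ) / n.factorial) *
          (w i * (x i - m i)) := by
        refine Finset.sum_congr rfl fun S hS => ?_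
        rw [hkey S]
        intro hiS
        have := Finset.mem_powerset.mp hS hiS
        exact (Finset.notMem_erase i _) this
    _ = w i * (x i - m i) := by
        rw [← Finset.sum_mul, hcoeff, one_mul]
end
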